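/- arXiv:2305.04330 — 3 statements merged into one kernel-verified Lean document; each statement's English description precedes it below -/
import Mathlib

section
/- Let Σ̂ ∈ ℝ^{p×p} be a symmetric positive definite Tyler fixed point for nonzero data vectors x₁,…,xₙ ∈ ℝᵖ with tr(Σ̂) = p, and let A ∈ ℝ^{p×p} be invertible. Set c = p / tr(A Σ̂ Aᵀ) (note tr(A Σ̂ Aᵀ) > 0 since A Σ̂ Aᵀ is positive definite) and Σ̂* = c · A Σ̂ Aᵀ. Then Σ̂* is symmetric positive definite, satisfies tr(Σ̂*) = p, and satisfies Tyler's fixed-point equation for the transformed data {A xᵢ}: Σ̂* = (1/n)∑_{i=1}^n (p/((A xᵢ)ᵀ (Σ̂*)⁻¹ (A xᵢ))) (A xᵢ)(A xᵢ)ᵀ. -/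
open Matrix Finset


lemma vecMulVec_mulVec' {p : ℕ} (A : Matrix (Fin p) (Fin p) ℝ) (v : Fin p → ℝ) :
    vecMulVec (A *ᵥ v) (A *ᵥ v) = A * vecMulVec v v * Aᵀ := by
  rw [vecMulVec_eq (Fin 1), vecMulVec_eq (Fin 1), replicateCol_mulVec, replicateRow_mulVec,
    transpose_mul, ← transpose_replicateRow]
  simp only [transpose_transpose, Matrix.mul_assoc]

lemma posDef_congr {p : ℕ} {S A : Matrix (Fin p) (Fin p) ℝ} (hS : S.PosDef)
    (hA : IsUnit A.det) : (A * S * Aᵀ).PosDef := by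
  refine posDef_iff_dotProduct_mulVec.mpr ⟨?_, ?_⟩
  · have := (hS.posSemidef.mul_mul_conjTranspose_same A).1
    simpa using this
  · intro v hv
    have hAv : Aᵀ *ᵥ v ≠ 0 := by
      intro h
      apply hv
      have : (Aᵀ)⁻¹ *ᵥ (Aᵀ *ᵥ v) = v := by
        rw [mulVec_mulVec, nonsing_inv_mul _ (by simpa [det_transpose] using hA), one_mulVec]
      rw [h, mulVec_zero] at this
      exact this.symm
    have := hS.dotProduct_mulVec_pos hAv
    simpa [star, ← mulVec_mulVec, dotProduct_mulVec, mulVec_transpose,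
      Matrix.dotProduct_mulVec] using this

lemma posDef_trace_pos {p : ℕ} (hp : 0 < p) {M : Matrix (Fin p) (Fin p) ℝ}
    (hM : M.PosDef) : 0 < M.trace := by
  have : ∀ i, 0 < M i i := by
    intro i
    have h1 : (Pi.single i 1 : Fin p → ℝ) ≠ 0 := by
      intro h; simpa using congrFun h i
    have := hM.dotProduct_mulVec_pos h1
    simpa [mulVec, dotProduct, Pi.single_apply] using this
  rw [trace]
  exact Finset.sum_pos (fun i _ => this i)
    (by simp [Finset.univ_nonempty_iff, Fin.pos_iff_nonempty.mp hp])

lemma quad_congr {p : ℕ} {A : Matrix (Fin p) (Fin p) ℝ} (hA : IsUnit A.det)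
    (M : Matrix (Fin p) (Fin p) ℝ) (v : Fin p → ℝ) :
    (A *ᵥ v) ⬝ᵥ ((Aᵀ)⁻¹ * M * A⁻¹) *ᵥ (A *ᵥ v) = v ⬝ᵥ M *ᵥ v := by
  have h1 : A⁻¹ *ᵥ (A *ᵥ v) = v := by
    rw [mulVec_mulVec, nonsing_inv_mul _ hA, one_mulVec]
  rw [← mulVec_mulVec, ← mulVec_mulVec, h1, Matrix.dotProduct_mulVec,
    ← transpose_nonsing_inv, vecMul_transpose, h1]

/-- Equivariance of Tyler's M-estimator: if `S` is a Tyler fixed point for nonzero data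
`x i` with `tr S = p` and `A` is invertible, then `Σ̂* = c • (A S Aᵀ)` with
`c = p / tr (A S Aᵀ)` is symmetric positive definite, has trace `p`, and satisfies
Tyler's fixed-point equation for the transformed data `A *ᵥ x i`. -/
theorem tyler_fixed_point_affine_equivariance
    {p n : ℕ} (hp : 0 < p) (hn : 0 < n)
    (x : Fin n → (Fin p → ℝ)) (hx : ∀ i, x i ≠ 0)
    (S : Matrix (Fin p) (Fin p) ℝ) (hS : S.PosDef)
    (hfix : S = (n : ℝ)⁻¹ • ∑ i : Fin n,
      ((p : ℝ) / (x i ⬝ᵥ S⁻¹ *ᵥ x i)) • vecMulVec (x i) (x i))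
    (htr : S.trace = (p : ℝ))
    (A : Matrix (Fin p) (Fin p) ℝ) (hA : IsUnit A.det)
    (c : ℝ) (hc : c = (p : ℝ) / (A * S * Aᵀ).trace)
    (Sstar : Matrix (Fin p) (Fin p) ℝ) (hSstar : Sstar = c • (A * S * Aᵀ)) :
    Sstar.PosDef ∧ Sstar.trace = (p : ℝ) ∧
    Sstar = (n : ℝ)⁻¹ • ∑ i : Fin n,
      ((p : ℝ) / ((A *ᵥ x i) ⬝ᵥ Sstar⁻¹ *ᵥ (A *ᵥ x i))) •
        vecMulVec (A *ᵥ x i) (A *ᵥ x i) := by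
  have hM : (A * S * Aᵀ).PosDef := posDef_congr hS hA
  have htrM : 0 < (A * S * Aᵀ).trace := posDef_trace_pos hp hM
  have hc0 : 0 < c := by
    rw [hc]; positivity
  have hSstarPD : Sstar.PosDef := by
    rw [hSstar]
    refine posDef_iff_dotProduct_mulVec.mpr ⟨?_, ?_⟩
    · have := hM.1
      simpa [IsHermitian, conjTranspose_smul, this.eq] using congrArg (c • ·) this.eq
    · intro v hv
      have := hM.dotProduct_mulVec_pos hv
      calc (0:ℝ) < c * (star v ⬝ᵥ (A * S * Aᵀ) *ᵥ v) := by positivity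
        _ = star v ⬝ᵥ (c • (A * S * Aᵀ)) *ᵥ v := by
            rw [smul_mulVec, dotProduct_smul]; rfl
  refine ⟨hSstarPD, ?_, ?_⟩
  · rw [hSstar, trace_smul, hc, smul_eq_mul, div_mul_cancel₀ _ (ne_of_gt htrM)]
  · -- inverse of Sstar
    have hdetM : IsUnit (A * S * Aᵀ).det := isUnit_iff_ne_zero.mpr (ne_of_gt hM.det_pos)
    have hinv : Sstar⁻¹ = c⁻¹ • ((Aᵀ)⁻¹ * S⁻¹ * A⁻¹) := by
      haveI : Invertible c := invertibleOfNonzero (ne_of_gt hc0)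
      rw [hSstar, Matrix.inv_smul _ c hdetM, Matrix.mul_inv_rev, Matrix.mul_inv_rev,
        invOf_eq_inv c, Matrix.mul_assoc]
    have hquad : ∀ i, (A *ᵥ x i) ⬝ᵥ Sstar⁻¹ *ᵥ (A *ᵥ x i)
        = c⁻¹ * (x i ⬝ᵥ S⁻¹ *ᵥ x i) := by
      intro i
      rw [hinv, smul_mulVec, dotProduct_smul, smul_eq_mul, quad_congr hA]
    have hcoef : ∀ i, (p : ℝ) / ((A *ᵥ x i) ⬝ᵥ Sstar⁻¹ *ᵥ (A *ᵥ x i))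
        = c * ((p : ℝ) / (x i ⬝ᵥ S⁻¹ *ᵥ x i)) := by
      intro i
      rw [hquad i, div_eq_mul_inv, div_eq_mul_inv, mul_inv, inv_inv]
      ring
    calc Sstar = c • (A * S * Aᵀ) := hSstar
      _ = c • (A * ((n : ℝ)⁻¹ • ∑ i : Fin n,
            ((p : ℝ) / (x i ⬝ᵥ S⁻¹ *ᵥ x i)) • vecMulVec (x i) (x i)) * Aᵀ) := by
          rw [← hfix]
      _ = (n : ℝ)⁻¹ • ∑ i : Fin n,
            ((p : ℝ) / ((A *ᵥ x i) ⬝ᵥ Sstar⁻¹ *ᵥ (A *ᵥ x i))) •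
              vecMulVec (A *ᵥ x i) (A *ᵥ x i) := by
          simp only [hcoef, vecMulVec_mulVec', Matrix.mul_smul, Matrix.smul_mul,
            Matrix.mul_sum, Matrix.sum_mul, Finset.smul_sum, smul_smul]
          apply Finset.sum_congr rfl
          intro i _
          ring_nf
end

section
/- Let Σ̂ ∈ ℝ^{p×p} be a symmetric positive definite Tyler fixed point for nonzero data vectors x₁,…,xₙ ∈ ℝᵖ with tr(Σ̂) = p, let A ∈ ℝ^{p×p} be invertible, set c = p / tr(A Σ̂ Aᵀ) and Σ̂* = c · A Σ̂ Aᵀ. Let η̂_TWE = ((p/n)∑_{i=1}^n (xᵢᵀ Σ̂⁻¹ xᵢ)⁻¹)⁻¹ be the TWE scale of {xᵢ} and let η̂* = ((p/n)∑_{i=1}^n ((A xᵢ)ᵀ (Σ̂*)⁻¹ (A xᵢ))⁻¹)⁻¹ be the TWE scale of the transformed data {A xᵢ} computed from Σ̂*. Then η̂* = c⁻¹ · η̂_TWE. -/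
open Matrix Finset

/-- Under the affine transformation `x i ↦ A *ᵥ x i` with `A` invertible, the TWE scale
computed from `Σ̂* = c • (A S Aᵀ)`, `c = p / tr (A S Aᵀ)`, satisfies
`η̂* = c⁻¹ · η̂_TWE`. -/
theorem twe_scale_affine_equivariance
    {p n : ℕ} (hp : 0 < p) (hn : 0 < n)
    (x : Fin n → (Fin p → ℝ)) (hx : ∀ i, x i ≠ 0)
    (S : Matrix (Fin p) (Fin p) ℝ) (hS : S.PosDef)
    (hfix : S = (n : ℝ)⁻¹ • ∑ i : Fin n,
      ((p : ℝ) / (x i ⬝ᵥ S⁻¹ *ᵥ x i)) • vecMulVec (x i) (x i))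
    (htr : S.trace = (p : ℝ))
    (A : Matrix (Fin p) (Fin p) ℝ) (hA : IsUnit A.det)
    (c : ℝ) (hc : c = (p : ℝ) / (A * S * Aᵀ).trace)
    (Sstar : Matrix (Fin p) (Fin p) ℝ) (hSstar : Sstar = c • (A * S * Aᵀ))
    (η : ℝ) (hη : η = (((p : ℝ) / n) * ∑ i : Fin n, (x i ⬝ᵥ S⁻¹ *ᵥ x i)⁻¹)⁻¹)
    (ηstar : ℝ)
    (hηstar : ηstar = (((p : ℝ) / n) *
      ∑ i : Fin n, ((A *ᵥ x i) ⬝ᵥ Sstar⁻¹ *ᵥ (A *ᵥ x i))⁻¹)⁻¹) :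
    ηstar = c⁻¹ * η := by
  have hAT : IsUnit Aᵀ.det := (Matrix.isUnit_det_transpose A hA)
  have hSdet : IsUnit S.det := hS.det_pos.ne'.isUnit
  -- A * S * Aᵀ is positive definite
  have hM : (A * S * Aᵀ).PosDef := by
    refine Matrix.PosDef.of_dotProduct_mulVec_pos ?_ (fun v hv => ?_)
    · have := Matrix.isHermitian_mul_mul_conjTranspose A hS.1
      simpa [Matrix.conjTranspose_eq_transpose_of_trivial] using this
    · have hv' : Aᵀ *ᵥ v ≠ 0 := by
        intro h
        apply hv
        have := congrArg (fun w => (Aᵀ)⁻¹ *ᵥ w) h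
        simpa [Matrix.mulVec_mulVec, Matrix.nonsing_inv_mul _ hAT] using this
      have hstar : (star v : Fin p → ℝ) = v := by simp
      rw [show (A * S * Aᵀ) *ᵥ v = A *ᵥ (S *ᵥ (Aᵀ *ᵥ v)) by
          simp [Matrix.mulVec_mulVec, Matrix.mul_assoc], hstar,
        Matrix.dotProduct_mulVec, ← Matrix.mulVec_transpose]
      have := hS.dotProduct_mulVec_pos hv'
      simpa using this
  -- its trace is positive
  have htrpos : 0 < (A * S * Aᵀ).trace := by
    rw [Matrix.trace]
    refine Finset.sum_pos (fun i _ => ?_) ⟨⟨0, hp⟩, Finset.mem_univ _⟩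
    have h1 : (Pi.single i 1 : Fin p → ℝ) ≠ 0 := by
      intro h
      have := congrFun h i
      simp at this
    have := hM.dotProduct_mulVec_pos h1
    simpa [dotProduct, Matrix.mulVec, Matrix.diag, Pi.single_apply,
      Finset.mul_sum] using this
  have hcpos : 0 < c := by
    rw [hc]
    exact div_pos (by exact_mod_cast hp) htrpos
  have hcne : c ≠ 0 := hcpos.ne'
  -- the key identity for each term
  have key : ∀ i, (A *ᵥ x i) ⬝ᵥ Sstar⁻¹ *ᵥ (A *ᵥ x i)
      = c⁻¹ * (x i ⬝ᵥ S⁻¹ *ᵥ x i) := by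
    intro i
    have hMdet : IsUnit (A * S * Aᵀ).det := hM.det_pos.ne'.isUnit
    have hinv : Sstar⁻¹ = c⁻¹ • ((Aᵀ)⁻¹ * S⁻¹ * A⁻¹) := by
      rw [hSstar]
      haveI := invertibleOfNonzero hcne
      rw [Matrix.inv_smul (A := A * S * Aᵀ) (k := c) hMdet, Matrix.mul_inv_rev, Matrix.mul_inv_rev]
      simp [Matrix.mul_assoc, invOf_eq_right_inv (mul_inv_cancel₀ hcne)]
    rw [hinv]
    have h2 : ((Aᵀ)⁻¹ * S⁻¹ * A⁻¹) *ᵥ (A *ᵥ x i) = ((Aᵀ)⁻¹ * S⁻¹) *ᵥ x i := by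
      rw [Matrix.mulVec_mulVec, Matrix.mul_assoc, Matrix.nonsing_inv_mul _ hA, Matrix.mul_one]
    rw [Matrix.smul_mulVec, dotProduct_smul, h2]
    congr 1
    calc (A *ᵥ x i) ⬝ᵥ ((Aᵀ)⁻¹ * S⁻¹) *ᵥ x i
        = (x i ᵥ* Aᵀ) ⬝ᵥ ((Aᵀ)⁻¹ * S⁻¹) *ᵥ x i := by rw [Matrix.vecMul_transpose]
      _ = x i ᵥ* (Aᵀ * ((Aᵀ)⁻¹ * S⁻¹)) ⬝ᵥ x i := by
          rw [Matrix.dotProduct_mulVec, Matrix.vecMul_vecMul]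
      _ = x i ⬝ᵥ S⁻¹ *ᵥ x i := by
          rw [← Matrix.mul_assoc, Matrix.mul_nonsing_inv _ hAT, Matrix.one_mul,
            ← Matrix.dotProduct_mulVec]
  rw [hηstar, hη]
  simp only [key]
  have : ∑ i : Fin n, (c⁻¹ * (x i ⬝ᵥ S⁻¹ *ᵥ x i))⁻¹
      = c * ∑ i : Fin n, (x i ⬝ᵥ S⁻¹ *ᵥ x i)⁻¹ := by
    rw [Finset.mul_sum]
    refine Finset.sum_congr rfl fun i _ => ?_
    rw [mul_inv, inv_inv]
  rw [this, show ((p : ℝ) / n) * (c * ∑ i : Fin n, (x i ⬝ᵥ S⁻¹ *ᵥ x i)⁻¹)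
      = c * (((p : ℝ) / n) * ∑ i : Fin n, (x i ⬝ᵥ S⁻¹ *ᵥ x i)⁻¹) by ring, mul_inv]
end

section
/- (Affine equivariance of the TWE scatter matrix.) Let Σ̂ ∈ ℝ^{p×p} be a symmetric positive definite Tyler fixed point for nonzero data vectors x₁,…,xₙ ∈ ℝᵖ with tr(Σ̂) = p, and let A ∈ ℝ^{p×p} be invertible. Set c = p / tr(A Σ̂ Aᵀ) and Σ̂* = c · A Σ̂ Aᵀ. Let Σ̂_TWE = η̂_TWE · Σ̂ with η̂_TWE = ((p/n)∑_{i=1}^n (xᵢᵀ Σ̂⁻¹ xᵢ)⁻¹)⁻¹, and let Σ̂*_TWE = η̂* · Σ̂* with η̂* = ((p/n)∑_{i=1}^n ((A xᵢ)ᵀ (Σ̂*)⁻¹ (A xᵢ))⁻¹)⁻¹ be the TWE scatter matrix of the transformed data {A xᵢ}. Then Σ̂*_TWE = A Σ̂_TWE Aᵀ. -/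
open Matrix Finset

lemma aux_quad {p : ℕ} (A N : Matrix (Fin p) (Fin p) ℝ) (v : Fin p → ℝ) :
    (A *ᵥ v) ⬝ᵥ N *ᵥ (A *ᵥ v) = v ⬝ᵥ (Aᵀ * N * A) *ᵥ v := by
  rw [Matrix.mul_assoc, ← mulVec_mulVec, ← mulVec_mulVec, dotProduct_mulVec v,
    vecMul_transpose]

lemma aux_posdef {p : ℕ} (A S : Matrix (Fin p) (Fin p) ℝ) (hA : IsUnit A.det)
    (hS : S.PosDef) : (A * S * Aᵀ).PosDef := by
  refine posDef_iff_dotProduct_mulVec.mpr ⟨?_, ?_⟩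
  · have h := hS.isHermitian
    show (A * S * Aᵀ)ᴴ = _
    rw [conjTranspose_eq_transpose_of_trivial, transpose_mul, transpose_mul,
      transpose_transpose, ← conjTranspose_eq_transpose_of_trivial S, h.eq, Matrix.mul_assoc]
  · intro v hv
    have hvA : Aᵀ *ᵥ v ≠ 0 := by
      intro h
      apply hv
      have hAT : IsUnit Aᵀ.det := by rwa [det_transpose]
      have := congrArg (fun w => (Aᵀ)⁻¹ *ᵥ w) h
      simpa [mulVec_mulVec, nonsing_inv_mul _ hAT] using this
    have key : star v ⬝ᵥ (A * S * Aᵀ) *ᵥ v = star (Aᵀ *ᵥ v) ⬝ᵥ S *ᵥ (Aᵀ *ᵥ v) := by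
      simp only [star_trivial]
      rw [show A * S * Aᵀ = Aᵀᵀ * S * Aᵀ by rw [transpose_transpose]]
      rw [← aux_quad]
    rw [key]
    exact hS.dotProduct_mulVec_pos hvA

lemma aux_trace_pos {p : ℕ} (hp : 0 < p) (M : Matrix (Fin p) (Fin p) ℝ)
    (hM : M.PosDef) : 0 < M.trace := by
  rw [Matrix.trace]
  apply Finset.sum_pos
  · intro i _
    have := hM.dotProduct_mulVec_pos (x := Pi.single i 1) (by
      intro h
      have := congrFun h i
      simp at this)
    simpa [Matrix.diag, dotProduct, mulVec, Pi.single_apply, Finset.sum_ite_eq] using this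
  · exact ⟨⟨0, hp⟩, Finset.mem_univ _⟩

/-- Affine equivariance of the TWE scatter matrix: with `Σ̂* = c • (A S Aᵀ)`,
`c = p / tr (A S Aᵀ)`, the TWE scatter matrix of the transformed data `A *ᵥ x i`
satisfies `Σ̂*_TWE = A Σ̂_TWE Aᵀ`. -/
theorem twe_scatter_affine_equivariance
    {p n : ℕ} (hp : 0 < p) (hn : 0 < n)
    (x : Fin n → (Fin p → ℝ)) (hx : ∀ i, x i ≠ 0)
    (S : Matrix (Fin p) (Fin p) ℝ) (hS : S.PosDef)
    (hfix : S = (n : ℝ)⁻¹ • ∑ i : Fin n,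
      ((p : ℝ) / (x i ⬝ᵥ S⁻¹ *ᵥ x i)) • vecMulVec (x i) (x i))
    (htr : S.trace = (p : ℝ))
    (A : Matrix (Fin p) (Fin p) ℝ) (hA : IsUnit A.det)
    (c : ℝ) (hc : c = (p : ℝ) / (A * S * Aᵀ).trace)
    (Sstar : Matrix (Fin p) (Fin p) ℝ) (hSstar : Sstar = c • (A * S * Aᵀ))
    (η : ℝ) (hη : η = (((p : ℝ) / n) * ∑ i : Fin n, (x i ⬝ᵥ S⁻¹ *ᵥ x i)⁻¹)⁻¹)
    (ηstar : ℝ)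
    (hηstar : ηstar = (((p : ℝ) / n) *
      ∑ i : Fin n, ((A *ᵥ x i) ⬝ᵥ Sstar⁻¹ *ᵥ (A *ᵥ x i))⁻¹)⁻¹) :
    ηstar • Sstar = A * (η • S) * Aᵀ := by
  have hMpd : (A * S * Aᵀ).PosDef := aux_posdef A S hA hS
  have htrM : 0 < (A * S * Aᵀ).trace := aux_trace_pos hp _ hMpd
  have hc0 : c ≠ 0 := by
    rw [hc]
    positivity
  have hSdet : IsUnit S.det := isUnit_iff_ne_zero.mpr (ne_of_gt hS.det_pos)
  have hAT : IsUnit Aᵀ.det := by rwa [det_transpose]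
  have hMdet : IsUnit (A * S * Aᵀ).det := by
    rw [det_mul, det_mul]
    exact (hA.mul hSdet).mul hAT
  have : Invertible c := invertibleOfNonzero hc0
  have hSstarInv : Sstar⁻¹ = c⁻¹ • ((Aᵀ)⁻¹ * (S⁻¹ * A⁻¹)) := by
    rw [hSstar]
    apply Matrix.inv_eq_left_inv
    rw [smul_mul_smul_comm, inv_mul_cancel₀ hc0, one_smul]
    simp only [Matrix.mul_assoc]
    rw [← Matrix.mul_assoc A⁻¹ A, nonsing_inv_mul A hA, Matrix.one_mul,
      ← Matrix.mul_assoc S⁻¹ S, nonsing_inv_mul S hSdet, Matrix.one_mul,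
      nonsing_inv_mul Aᵀ hAT]
  have key : Aᵀ * ((Aᵀ)⁻¹ * (S⁻¹ * A⁻¹)) * A = S⁻¹ := by
    rw [← Matrix.mul_assoc Aᵀ, mul_nonsing_inv Aᵀ hAT, Matrix.one_mul,
      Matrix.mul_assoc, nonsing_inv_mul A hA, Matrix.mul_one]
  have hform : ∀ i, (A *ᵥ x i) ⬝ᵥ Sstar⁻¹ *ᵥ (A *ᵥ x i)
      = c⁻¹ * (x i ⬝ᵥ S⁻¹ *ᵥ x i) := by
    intro i
    rw [hSstarInv, smul_mulVec, dotProduct_smul, smul_eq_mul, aux_quad, key]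
  have hsum : ∑ i : Fin n, ((A *ᵥ x i) ⬝ᵥ Sstar⁻¹ *ᵥ (A *ᵥ x i))⁻¹
      = c * ∑ i : Fin n, (x i ⬝ᵥ S⁻¹ *ᵥ x i)⁻¹ := by
    rw [Finset.mul_sum]
    refine Finset.sum_congr rfl fun i _ => ?_
    rw [hform i, mul_inv, inv_inv]
  set T := ∑ i : Fin n, (x i ⬝ᵥ S⁻¹ *ᵥ x i)⁻¹ with hT
  have hηstar' : ηstar = η * c⁻¹ := by
    rw [hηstar, hsum, hη]
    rw [show (p : ℝ) / n * (c * T) = c * ((p : ℝ) / n * T) by ring]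
    rw [mul_inv, mul_comm]
  rw [hηstar', hSstar, smul_smul, Matrix.mul_smul, Matrix.smul_mul]
  congr 1
  field_simp
end
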